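/- Let R be a ring, r ≥ 1, and c ∈ ℤ^r. Every finitely supported function f : ℤ^r → R with Σ_{x ∈ ℤ^r} f(x) = 0 can be written as f = g₀ + g₁ + … + g_r, where each g_i : ℤ^r → R is finitely supported, g₀(x) + g₀(c − x) = 0 for all x ∈ ℤ^r, and for each i = 1,…,r, g_i(x) + g_i(c + e_i − x) = 0 for all x ∈ ℤ^r, where e_i is the i-th standard basis vector of ℤ^r. -/

import Mathlib

namespace SkewAux

variable {R : Type*} [Ring R] {r : ℕ}

def Good (c : Fin r → ℤ) (f : (Fin r → ℤ) → R) : Prop :=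
  ∃ (g₀ : (Fin r → ℤ) → R) (g : Fin r → (Fin r → ℤ) → R),
    (Function.support g₀).Finite ∧ (∀ i, (Function.support (g i)).Finite) ∧
    (∀ x, f x = g₀ x + ∑ i, g i x) ∧
    (∀ x, g₀ x + g₀ (c - x) = 0) ∧
    (∀ i, ∀ x, g i x + g i (c + Pi.single i 1 - x) = 0)

lemma good_congr {c : Fin r → ℤ} {f f' : (Fin r → ℤ) → R}
    (h : ∀ z, f z = f' z) (hf : Good c f) : Good c f' := by
  obtain ⟨g₀, g, h1, h2, h3, h4, h5⟩ := hf
  exact ⟨g₀, g, h1, h2, fun x => (h x) ▸ h3 x, h4, h5⟩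

lemma good_zero (c : Fin r → ℤ) : Good c (fun _ => (0 : R)) := by
  refine ⟨fun _ => 0, fun _ _ => 0, ?_, ?_, ?_, ?_, ?_⟩ <;>
    simp [Function.support_fun_zero]

lemma good_add {c : Fin r → ℤ} {f f' : (Fin r → ℤ) → R}
    (hf : Good c f) (hf' : Good c f') : Good c (fun z => f z + f' z) := by
  obtain ⟨g₀, g, h1, h2, h3, h4, h5⟩ := hf
  obtain ⟨g₀', g', h1', h2', h3', h4', h5'⟩ := hf'
  refine ⟨fun z => g₀ z + g₀' z, fun i z => g i z + g' i z, ?_, ?_, ?_, ?_, ?_⟩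
  · exact ((h1.union h1').subset (Function.support_add _ _))
  · exact fun i => ((h2 i).union (h2' i)).subset (Function.support_add _ _)
  · intro x
    show f x + f' x = (g₀ x + g₀' x) + ∑ i, (g i x + g' i x)
    rw [h3 x, h3' x, Finset.sum_add_distrib]
    abel
  · intro x
    show (g₀ x + g₀' x) + (g₀ (c - x) + g₀' (c - x)) = 0
    rw [add_add_add_comm, h4 x, h4' x, add_zero]
  · intro i x
    show (g i x + g' i x) + (g i (c + Pi.single i 1 - x) + g' i (c + Pi.single i 1 - x)) = 0
    rw [add_add_add_comm, h5 i x, h5' i x, add_zero]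

lemma good_smul {c : Fin r → ℤ} (a : R) {f : (Fin r → ℤ) → R}
    (hf : Good c f) : Good c (fun z => a * f z) := by
  obtain ⟨g₀, g, h1, h2, h3, h4, h5⟩ := hf
  refine ⟨fun z => a * g₀ z, fun i z => a * g i z, ?_, ?_, ?_, ?_, ?_⟩
  · refine h1.subset fun z hz => ?_
    simp only [Function.mem_support] at hz ⊢
    intro h0; exact hz (by rw [h0, mul_zero])
  · intro i
    refine (h2 i).subset fun z hz => ?_
    simp only [Function.mem_support] at hz ⊢
    intro h0; exact hz (by rw [h0, mul_zero])
  · intro x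
    show a * f x = a * g₀ x + ∑ i, a * g i x
    rw [h3 x, mul_add, Finset.mul_sum]
  · intro x
    show a * g₀ x + a * g₀ (c - x) = 0
    rw [← mul_add, h4 x, mul_zero]
  · intro i x
    show a * g i x + a * g i (c + Pi.single i 1 - x) = 0
    rw [← mul_add, h5 i x, mul_zero]

lemma good_neg {c : Fin r → ℤ} {f : (Fin r → ℤ) → R}
    (hf : Good c f) : Good c (fun z => -f z) := by
  have := good_smul (-1 : R) hf
  exact good_congr (fun z => by rw [neg_one_mul]) this

noncomputable def delta (x : Fin r → ℤ) : (Fin r → ℤ) → R :=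
  fun y => if y = x then 1 else 0

lemma delta_support (x : Fin r → ℤ) :
    Function.support (delta (R := R) x) ⊆ {x} := by
  intro y hy
  simp only [Function.mem_support, delta] at hy
  by_contra h
  simp only [Set.mem_singleton_iff] at h
  exact hy (if_neg h)

lemma skew_pair (c' x y : Fin r → ℤ) :
    (delta (R := R) x y - delta (c' - x) y)
      + (delta x (c' - y) - delta (c' - x) (c' - y)) = 0 := by
  have h1 : (c' - y = x) ↔ (y = c' - x) := by
    constructor
    · intro h; rw [← h, sub_sub_cancel]
    · intro h; rw [h, sub_sub_cancel]
  have h2 : (c' - y = c' - x) ↔ (y = x) := sub_right_inj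
  simp only [delta, if_congr h1 rfl rfl, if_congr h2 rfl rfl]
  abel

lemma good_pairfin (x y : Fin r → ℤ) :
    (Function.support fun z => delta (R := R) x z - delta y z).Finite := by
  refine (Set.finite_singleton x |>.union (Set.finite_singleton y)).subset ?_
  intro z hz
  simp only [Function.mem_support, delta] at hz
  by_contra h
  simp only [Set.mem_union, Set.mem_singleton_iff, not_or] at h
  exact hz (by rw [if_neg h.1, if_neg h.2, sub_zero])

lemma good_elem0 (c x : Fin r → ℤ) :
    Good c (fun z => delta (R := R) x z - delta (c - x) z) := by
  refine ⟨fun z => delta x z - delta (c - x) z, fun _ _ => 0, ?_, ?_, ?_, ?_, ?_⟩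
  · exact good_pairfin x (c - x)
  · simp [Function.support_fun_zero]
  · intro z; simp
  · intro z; exact skew_pair c x z
  · intro i z; simp

lemma good_elemi (c : Fin r → ℤ) (i : Fin r) (x : Fin r → ℤ) :
    Good c (fun z => delta (R := R) x z - delta (c + Pi.single i 1 - x) z) := by
  classical
  refine ⟨fun _ => 0, fun j z => if j = i then delta x z - delta (c + Pi.single i 1 - x) z else 0,
    ?_, ?_, ?_, ?_, ?_⟩
  · simp [Function.support_fun_zero]
  · intro j
    by_cases hj : j = i
    · subst hj
      simp only [if_pos rfl]
      exact good_pairfin x _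
    · simp [hj, Function.support_fun_zero]
  · intro z
    simp only [Finset.sum_ite_eq', Finset.mem_univ, if_true, zero_add]
  · intro z; simp
  · intro j z
    by_cases hj : j = i
    · subst hj
      simp only [if_pos rfl]
      exact skew_pair (c + Pi.single j 1) x z
    · simp [hj]

lemma good_step (c : Fin r → ℤ) (i : Fin r) (x : Fin r → ℤ) :
    Good c (fun z => delta (R := R) x z - delta (x + Pi.single i 1) z) := by
  have h1 := good_elem0 (R := R) c x
  have h2 := good_elemi (R := R) c i (c - x)
  have key : c + Pi.single i 1 - (c - x) = x + Pi.single i 1 := by abel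
  rw [key] at h2
  refine good_congr ?_ (good_add h1 h2)
  intro z; abel

lemma good_pair (c : Fin r → ℤ) (x y : Fin r → ℤ) :
    Good c (fun z => delta (R := R) x z - delta y z) := by
  classical
  generalize hn : (∑ i, (y i - x i).natAbs) = n
  induction n using Nat.strong_induction_on generalizing x with
  | _ n ih =>
    by_cases hxy : x = y
    · subst hxy
      exact good_congr (fun z => by abel) (good_zero c)
    · have hex : ∃ i, x i ≠ y i := by
        by_contra h
        push_neg at h
        exact hxy (funext h)
      obtain ⟨i, hi⟩ := hex
      set s : ℤ := if x i < y i then 1 else -1 with hs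
      set x' : Fin r → ℤ := x + Pi.single i s with hx'
      have hx'j : ∀ j, j ≠ i → x' j = x j := by
        intro j hj
        simp [hx', Pi.single_eq_of_ne hj]
      have hx'i : x' i = x i + s := by simp [hx']
      have hlt : (∑ j, (y j - x' j).natAbs) < n := by
        rw [← hn]
        apply Finset.sum_lt_sum
        · intro j _
          by_cases hj : j = i
          · subst hj
            rw [hx'i, hs]
            split_ifs with h <;> omega
          · rw [hx'j j hj]
        · refine ⟨i, Finset.mem_univ i, ?_⟩
          rw [hx'i, hs]
          split_ifs with h <;> omega
      have hstep : Good c (fun z => delta (R := R) x z - delta x' z) := by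
        rcases lt_or_ge (x i) (y i) with h | h
        · have hs1 : s = 1 := if_pos h
          have : x' = x + Pi.single i 1 := by rw [hx', hs1]
          rw [this]
          exact good_step c i x
        · have hs1 : s = -1 := if_neg (not_lt.mpr h)
          have hxx : x' + Pi.single i 1 = x := by
            rw [hx', hs1]
            funext j
            by_cases hj : j = i
            · subst hj; simp
            · simp [Pi.single_eq_of_ne hj]
          have := good_step (R := R) c i x'
          rw [hxx] at this
          exact good_congr (fun z => by abel) (good_neg this)
      have hrest : Good c (fun z => delta (R := R) x' z - delta y z) :=
        ih _ hlt x' rfl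
      exact good_congr (fun z => by abel) (good_add hstep hrest)

lemma good_sum {c : Fin r → ℤ} {α : Type*} (s : Finset α)
    (F : α → (Fin r → ℤ) → R) (h : ∀ a ∈ s, Good c (F a)) :
    Good c (fun z => ∑ a ∈ s, F a z) := by
  classical
  induction s using Finset.induction with
  | empty => exact good_congr (fun z => by simp) (good_zero c)
  | @insert a s' hni ihs =>
    refine good_congr (fun z => ?_) (good_add (h a (Finset.mem_insert_self a s'))
      (ihs fun b hb => h b (Finset.mem_insert_of_mem hb)))
    rw [Finset.sum_insert hni]

end SkewAux

open SkewAux in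
theorem sum_of_skew_symmetric (R : Type*) [Ring R] (r : ℕ) (hr : 1 ≤ r)
    (c : Fin r → ℤ) (f : (Fin r → ℤ) → R)
    (hfin : (Function.support f).Finite) (hsum : ∑ᶠ x, f x = 0) :
    ∃ (g₀ : (Fin r → ℤ) → R) (g : Fin r → (Fin r → ℤ) → R),
      (Function.support g₀).Finite ∧ (∀ i, (Function.support (g i)).Finite) ∧
      (∀ x, f x = g₀ x + ∑ i, g i x) ∧
      (∀ x, g₀ x + g₀ (c - x) = 0) ∧
      (∀ i, ∀ x, g i x + g i (c + Pi.single i 1 - x) = 0) := by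
  classical
  set s := hfin.toFinset with hsdef
  have hsum' : ∑ x ∈ s, f x = 0 := by
    rw [← finsum_eq_sum f hfin, hsum]
  have hf_eq : ∀ z, (∑ x ∈ s, f x * (delta x z - delta c z)) = f z := by
    intro z
    have : ∀ x ∈ s, f x * (delta (R := R) x z - delta c z)
        = (if z = x then f x else 0) - f x * delta c z := by
      intro x _
      simp only [delta, mul_sub, mul_ite, mul_one, mul_zero]
    rw [Finset.sum_congr rfl this, Finset.sum_sub_distrib, ← Finset.sum_mul, hsum', zero_mul,
      sub_zero]
    have : (∑ x ∈ s, if z = x then f x else 0) = if z ∈ s then f z else 0 := by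
      simp [Finset.sum_ite_eq]
    rw [this]
    split_ifs with h
    · rfl
    · have : f z = 0 := by
        by_contra h0
        exact h (by simp [hsdef, Function.mem_support, h0])
      rw [this]
  have hGood : Good c f := by
    refine good_congr hf_eq (good_sum s _ fun x _ => ?_)
    exact good_smul (f x) (good_pair c x c)
  obtain ⟨g₀, g, h1, h2, h3, h4, h5⟩ := hGood
  exact ⟨g₀, g, h1, h2, h3, h4, h5⟩
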